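/- Let $n \geq 2$ and let $\boldsymbol{\lambda}$ be an $n$-tuple of single cells with contents in $\{0,1\}$ such that the cells indexed $i$ and $i+1$ have contents $\epsilon$ and $1-\epsilon$ respectively, for some $\epsilon \in \{0,1\}$ and some $0 \leq i \leq n-2$. Let $\boldsymbol{\mu}_0$ (resp. $\boldsymbol{\mu}_1$) be the $(n-1)$-tuple obtained by replacing these two cells by a single horizontal (resp. vertical) domino with content set $\{0,1\}$ at position $i$. Then the standard-filling generating functions satisfy $\sum_{\mathbf{T} \in \mathrm{SYT}(\boldsymbol{\lambda})} q^{\mathrm{inv}(\mathbf{T})} t_{\mathrm{Des}(\mathbf{T})} = \sum_{\mathbf{T} \in \mathrm{SYT}(\boldsymbol{\mu}_0)} q^{\mathrm{inv}(\mathbf{T})} t_{\mathrm{Des}(\mathbf{T})} + q^{\epsilon} \sum_{\mathbf{T} \in \mathrm{SYT}(\boldsymbol{\mu}_1)} q^{\mathrm{inv}(\mathbf{T})} t_{\mathrm{Des}(\mathbf{T})}$, as elements of the free $\mathbb{Z}[q]$-module on formal symbols $t_D$, $D \subseteq \{1, \dots, n-1\}$. -/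

import Mathlib

/-- One-indexed position of the cell `x` in the content reading word determined
by the (injective) shifted-content function `sh`. -/
def wpos {N : ℕ} (sh : Fin N → ℕ) (x : Fin N) : ℕ :=
  (Finset.univ.filter (fun y => sh y < sh x)).card + 1

/-- Position in the content reading word of the cell carrying the entry `k`
(zero-indexed entries; identity outside range). -/
def wepos {N : ℕ} (sh : Fin N → ℕ) (T : Equiv.Perm (Fin N)) (k : ℕ) : ℕ :=
  if h : k < N then wpos sh (T⁻¹ ⟨k, h⟩) else k

/-- Descent set of the content reading word of the filling `T`:
`k ∈ {1,…,N-1}` is a descent when the entry `k+1` appears before the entry `k`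
in the reading word (zero-indexed entries below: entry `k` before entry `k-1`). -/
def wdes {N : ℕ} (sh : Fin N → ℕ) (T : Equiv.Perm (Fin N)) : Finset ℕ :=
  (Finset.Ico 1 N).filter (fun k => wepos sh T k < wepos sh T (k - 1))

/-- Inversion number of a filling: pairs of cells `(x,y)` with
`0 < c̃(y) - c̃(x) < d` and `T(x) > T(y)`. -/
def winv {N : ℕ} (d : ℕ) (sh : Fin N → ℕ) (T : Equiv.Perm (Fin N)) : ℕ :=
  (Finset.univ.filter (fun p : Fin N × Fin N =>
    sh p.1 < sh p.2 ∧ sh p.2 < sh p.1 + d ∧ T p.2 < T p.1)).card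

/-- Generating function `∑_{T ∈ S} q^{inv(T)} t_{Des(T)}` over a set `S` of
standard fillings, in the free `ℤ[q]`-module on symbols `t_D`. -/
noncomputable def wGF {N : ℕ} (d : ℕ) (sh : Fin N → ℕ)
    (S : Set (Equiv.Perm (Fin N))) : Finset ℕ →₀ Polynomial ℤ :=
  ∑ T : Equiv.Perm (Fin N),
    S.indicator (fun T => Finsupp.single (wdes sh T)
      ((Polynomial.X : Polynomial ℤ) ^ winv d sh T)) T

lemma card_filter_equiv {α β : Type*} [Fintype α] [Fintype β] [DecidableEq β]
    (e : α ≃ β) (p : β → Prop) [DecidablePred p] :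
    (Finset.univ.filter fun a => p (e a)).card = (Finset.univ.filter p).card := by
  have h : (Finset.univ.filter fun a => p (e a)).map e.toEmbedding
      = Finset.univ.filter p := by
    ext b
    simp only [Finset.mem_map, Finset.mem_filter, Finset.mem_univ, true_and,
      Equiv.coe_toEmbedding]
    constructor
    · rintro ⟨a, hpa, rfl⟩; exact hpa
    · intro hb; exact ⟨e.symm b, by simpa using hb, e.apply_symm_apply b⟩
  rw [← h, Finset.card_map]

lemma wpos_congr {N : ℕ} (sh sh' : Fin N → ℕ)
    (h : ∀ x y, sh x < sh y ↔ sh' x < sh' y) (x : Fin N) :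
    wpos sh x = wpos sh' x := by
  unfold wpos
  have hs : (Finset.univ.filter (fun y => sh y < sh x))
      = (Finset.univ.filter (fun y => sh' y < sh' x)) := by
    ext y
    simp only [Finset.mem_filter, Finset.mem_univ, true_and]
    exact h y x
  rw [hs]

lemma wdes_congr {N : ℕ} (sh sh' : Fin N → ℕ) (T T' : Equiv.Perm (Fin N))
    (h : ∀ k (hk : k < N), wpos sh (T⁻¹ ⟨k, hk⟩) = wpos sh' (T'⁻¹ ⟨k, hk⟩)) :
    wdes sh T = wdes sh' T' := by
  have hw : ∀ k, wepos sh T k = wepos sh' T' k := by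
    intro k
    unfold wepos
    split
    · exact h k _
    · rfl
  unfold wdes
  ext k
  simp only [Finset.mem_filter, hw]

lemma ordnat (n I x y cx cy : ℕ) (hn : 2 ≤ n) (hx : x < n) (hy : y < n)
    (hI : I + 1 < n) (hcx : cx ≤ 1) (hcy : cy ≤ 1)
    (h1 : x = I → y = I + 1 → cx ≠ cy) (h2 : y = I → x = I + 1 → cx ≠ cy) :
    (n * cx + x < n * cy + y
      ↔ (n-1) * cx + (if x ≤ I then x else x - 1)
          < (n-1) * cy + (if y ≤ I then y else y - 1)) := by
  interval_cases cx <;> interval_cases cy <;> split_ifs <;> omega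

lemma windownat (n I x y cx cy : ℕ) (hn : 2 ≤ n) (hx : x < n) (hy : y < n)
    (hI : I + 1 < n) (hcx : cx ≤ 1) (hcy : cy ≤ 1)
    (h1 : x = I → y = I + 1 → cx ≠ cy) (h2 : y = I → x = I + 1 → cx ≠ cy)
    (h3 : ¬(x = I + 1 ∧ y = I)) :
    ((n * cx + x < n * cy + y ∧ n * cy + y < n * cx + x + n)
      ↔ ((n-1) * cx + (if x ≤ I then x else x - 1)
            < (n-1) * cy + (if y ≤ I then y else y - 1)
          ∧ (n-1) * cy + (if y ≤ I then y else y - 1)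
            < (n-1) * cx + (if x ≤ I then x else x - 1) + (n-1))) := by
  interval_cases cx <;> interval_cases cy <;> split_ifs <;> omega

lemma specialnat1 (n I e : ℕ) (hn : 2 ≤ n) (hI : I + 1 < n) (he : e ≤ 1) :
    ((n * (1-e) + (I+1) < n * e + I ∧ n * e + I < n * (1-e) + (I+1) + n) ↔ e = 1) := by
  interval_cases e <;> omega

lemma specialnat2 (n I e : ℕ) (hn : 2 ≤ n) (hI : I + 1 < n) (he : e ≤ 1) :
    ¬((n-1) * (1-e) + I < (n-1) * e + I
        ∧ (n-1) * e + I < (n-1) * (1-e) + I + (n-1)) := by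
  interval_cases e <;> omega

/-- Lemma 4.8: let `λ` be an `n`-tuple of single cells with
0-1 contents `co`, the `i`-th cell of content `ε` and the `(i+1)`-st of content
`1-ε`; shifted contents `n·co(j) + j`, `d = n`, all fillings standard.  Let `μ`
be the `(n-1)`-tuple obtained by merging these two cells into a domino at index
`i` (its content-0 cell is the original cell `i`, its content-1 cell the
original cell `i+1`), with shifted contents computed with `d = n - 1`; its
standard fillings are those with `T(i) < T(i+1)` for the horizontal domino
`μ₀`, resp. `T(i+1) < T(i)` for the vertical domino `μ₁`.  Then
`G_λ = G_{μ₀} + q^ε · G_{μ₁}`. -/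
theorem stmt14 (n : ℕ) (hn : 2 ≤ n) (ε : ℕ) (hε : ε ≤ 1)
    (co : Fin n → ℕ) (hco : ∀ j, co j ≤ 1)
    (i i1 : Fin n) (hi1 : (i1 : ℕ) = (i : ℕ) + 1)
    (hci : co i = ε) (hci1 : co i1 = 1 - ε) :
    wGF n (fun j => n * co j + (j : ℕ)) Set.univ
      = wGF (n - 1)
          (fun j => if (j : ℕ) < (i : ℕ) then (n - 1) * co j + (j : ℕ)
            else if j = i then (i : ℕ)
            else if j = i1 then (n - 1) + (i : ℕ)
            else (n - 1) * co j + ((j : ℕ) - 1))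
          {T | T i < T i1}
      + ((Polynomial.X : Polynomial ℤ) ^ ε) •
        wGF (n - 1)
          (fun j => if (j : ℕ) < (i : ℕ) then (n - 1) * co j + (j : ℕ)
            else if j = i then (i : ℕ)
            else if j = i1 then (n - 1) + (i : ℕ)
            else (n - 1) * co j + ((j : ℕ) - 1))
          {T | T i1 < T i} := by
  classical
  have hIn : (i : ℕ) + 1 < n := by rw [← hi1]; exact i1.isLt
  have hii1 : i ≠ i1 := by
    intro h
    rw [h] at hi1
    omega
  have hε01 : ε = 0 ∨ ε = 1 := by omega
  set A : Fin n → ℕ := fun j => n * co j + (j : ℕ) with hAdef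
  set B : Fin n → ℕ := fun j => if (j : ℕ) < (i : ℕ) then (n - 1) * co j + (j : ℕ)
            else if j = i then (i : ℕ)
            else if j = i1 then (n - 1) + (i : ℕ)
            else (n - 1) * co j + ((j : ℕ) - 1) with hBdef
  set g : Fin n → ℕ :=
    fun j => (n-1) * co j + (if (j : ℕ) ≤ (i : ℕ) then (j : ℕ) else (j : ℕ) - 1) with hgdef
  -- content mismatch on the special pair
  have hkey12 : ∀ x y : Fin n, (x : ℕ) = (i : ℕ) → (y : ℕ) = (i : ℕ) + 1 → co x ≠ co y := by
    intro x y hx hy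
    have hxi : x = i := Fin.ext hx
    have hyi : y = i1 := Fin.ext (by rw [hy, hi1])
    subst hxi; subst hyi
    rw [hci, hci1]; omega
  -- order preservation
  have hord : ∀ x y, A x < A y ↔ g x < g y := by
    intro x y
    exact ordnat n i x y (co x) (co y) hn x.isLt y.isLt hIn (hco x) (hco y)
      (hkey12 x y) (fun hy hx => (hkey12 y x hy hx).symm)
  -- the swap (identity for ε = 0)
  set σ : Equiv.Perm (Fin n) := if ε = 1 then Equiv.swap i i1 else Equiv.refl (Fin n) with hσdef
  have hσσ : ∀ x, σ (σ x) = x := by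
    intro x
    rw [hσdef]
    split
    · exact Equiv.swap_apply_self i i1 x
    · rfl
  have hσB : ∀ j, B (σ j) = g j := by
    rcases hε01 with h0 | h1
    · have hσ : σ = Equiv.refl (Fin n) := by rw [hσdef, if_neg (by omega)]
      intro j
      rw [hσ]
      simp only [Equiv.refl_apply, hBdef, hgdef]
      by_cases hlt : (j : ℕ) < (i : ℕ)
      · rw [if_pos hlt, if_pos (le_of_lt hlt)]
      · rw [if_neg hlt]
        by_cases hji : j = i
        · rw [hji, if_pos rfl, if_pos (le_refl _), hci, h0, mul_zero, zero_add]
        · rw [if_neg hji]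
          by_cases hji1 : j = i1
          · rw [hji1, if_pos rfl, hci1, h0, if_neg (by omega : ¬ (i1 : ℕ) ≤ (i : ℕ))]
            simp only [Nat.sub_zero, mul_one]
            omega
          · rw [if_neg hji1]
            have hne : (j : ℕ) ≠ (i : ℕ) := fun h => hji (Fin.ext h)
            rw [if_neg (by omega : ¬ (j : ℕ) ≤ (i : ℕ))]
    · have hσ : σ = Equiv.swap i i1 := by rw [hσdef, if_pos h1]
      intro j
      rw [hσ]
      by_cases hji : j = i
      · rw [hji, Equiv.swap_apply_left]
        simp only [hBdef, hgdef]
        rw [if_neg (by omega : ¬ (i1 : ℕ) < (i : ℕ)), if_neg (Ne.symm hii1)]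
        simp [hci, h1]
      · by_cases hji1 : j = i1
        · rw [hji1, Equiv.swap_apply_right]
          simp only [hBdef, hgdef]
          rw [if_neg (lt_irrefl (i : ℕ))]
          have hle : ¬ (i1 : ℕ) ≤ (i : ℕ) := by omega
          simp [hle, hci1, h1]
          omega
        · rw [Equiv.swap_apply_of_ne_of_ne hji hji1]
          simp only [hBdef, hgdef]
          by_cases hlt : (j : ℕ) < (i : ℕ)
          · rw [if_pos hlt, if_pos (le_of_lt hlt)]
          · have hne : (j : ℕ) ≠ (i : ℕ) := fun h => hji (Fin.ext h)
            rw [if_neg hlt, if_neg hji, if_neg hji1,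
              if_neg (by omega : ¬ (j : ℕ) ≤ (i : ℕ))]
  -- special pair facts
  have hAsp : (A i1 < A i ∧ A i < A i1 + n) ↔ ε = 1 := by
    have := specialnat1 n i ε hn hIn hε
    rw [hAdef]
    simpa only [hci, hci1, hi1] using this
  have hgsp : ¬(g i1 < g i ∧ g i < g i1 + (n-1)) := by
    have := specialnat2 n i ε hn hIn hε
    rw [hgdef]
    simp only [hci, hci1, hi1]
    simpa only [if_neg (by omega : ¬ (i:ℕ) + 1 ≤ (i:ℕ)), if_pos (le_refl (i:ℕ)), Nat.add_sub_cancel] using this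
  -- window equivalence away from the special pair
  have hwin : ∀ p : Fin n × Fin n, p ≠ (i1, i) →
      ((A p.1 < A p.2 ∧ A p.2 < A p.1 + n) ↔ (g p.1 < g p.2 ∧ g p.2 < g p.1 + (n-1))) := by
    intro p hp
    have h3 : ¬((p.1 : ℕ) = (i : ℕ) + 1 ∧ (p.2 : ℕ) = (i : ℕ)) := by
      rintro ⟨ha, hb⟩
      exact hp (Prod.ext (Fin.ext (by rw [ha, ← hi1])) (Fin.ext hb))
    exact windownat n i p.1 p.2 (co p.1) (co p.2) hn p.1.isLt p.2.isLt hIn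
      (hco p.1) (hco p.2) (hkey12 p.1 p.2) (fun hy hx => (hkey12 p.2 p.1 hy hx).symm) h3
  -- inversion relation
  have hinv : ∀ T : Equiv.Perm (Fin n),
      winv n A T = winv (n-1) g T + (if T i < T i1 then ε else 0) := by
    intro T
    unfold winv
    by_cases hc : ε = 1 ∧ T i < T i1
    · have hset : (Finset.univ.filter (fun p : Fin n × Fin n =>
          A p.1 < A p.2 ∧ A p.2 < A p.1 + n ∧ T p.2 < T p.1))
          = insert (i1, i) (Finset.univ.filter (fun p : Fin n × Fin n =>
              g p.1 < g p.2 ∧ g p.2 < g p.1 + (n-1) ∧ T p.2 < T p.1)) := by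
        ext p
        simp only [Finset.mem_insert, Finset.mem_filter, Finset.mem_univ, true_and]
        by_cases hp : p = (i1, i)
        · subst hp
          constructor
          · intro _; exact Or.inl rfl
          · intro _; exact ⟨(hAsp.mpr hc.1).1, (hAsp.mpr hc.1).2, hc.2⟩
        · have hw := hwin p hp
          constructor
          · rintro ⟨ha, hb, hT⟩
            exact Or.inr ⟨(hw.mp ⟨ha, hb⟩).1, (hw.mp ⟨ha, hb⟩).2, hT⟩
          · rintro (h | ⟨ha, hb, hT⟩)
            · exact absurd h hp
            · exact ⟨(hw.mpr ⟨ha, hb⟩).1, (hw.mpr ⟨ha, hb⟩).2, hT⟩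
      rw [hset, Finset.card_insert_of_notMem, if_pos hc.2, hc.1]
      simp only [Finset.mem_filter, Finset.mem_univ, true_and]
      intro hmem
      exact hgsp ⟨hmem.1, hmem.2.1⟩
    · have hset : (Finset.univ.filter (fun p : Fin n × Fin n =>
          A p.1 < A p.2 ∧ A p.2 < A p.1 + n ∧ T p.2 < T p.1))
          = (Finset.univ.filter (fun p : Fin n × Fin n =>
              g p.1 < g p.2 ∧ g p.2 < g p.1 + (n-1) ∧ T p.2 < T p.1)) := by
        ext p
        simp only [Finset.mem_filter, Finset.mem_univ, true_and]
        by_cases hp : p = (i1, i)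
        · subst hp
          constructor
          · rintro ⟨ha, hb, hT⟩
            exact absurd ⟨hAsp.mp ⟨ha, hb⟩, hT⟩ hc
          · rintro ⟨ha, hb, hT⟩
            exact absurd ⟨ha, hb⟩ hgsp
        · have hw := hwin p hp
          constructor
          · rintro ⟨ha, hb, hT⟩
            exact ⟨(hw.mp ⟨ha, hb⟩).1, (hw.mp ⟨ha, hb⟩).2, hT⟩
          · rintro ⟨ha, hb, hT⟩
            exact ⟨(hw.mpr ⟨ha, hb⟩).1, (hw.mpr ⟨ha, hb⟩).2, hT⟩
      rw [hset]
      have : (if T i < T i1 then ε else 0) = 0 := by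
        split
        · rcases hε01 with h | h
          · exact h
          · exact absurd ⟨h, by assumption⟩ hc
        · rfl
      rw [this]
      exact (Nat.add_zero _).symm
  -- positions agree
  have hwpos : ∀ x, wpos A x = wpos g x := wpos_congr A g hord
  have hwposB : ∀ x, wpos g x = wpos B (σ x) := by
    intro x
    unfold wpos
    have h1 : (Finset.univ.filter fun y => g y < g x)
        = Finset.univ.filter fun y => B (σ y) < B (σ x) := by
      ext y
      simp only [Finset.mem_filter, Finset.mem_univ, true_and, hσB]
    rw [h1]
    exact congrArg (· + 1) (card_filter_equiv σ (fun y => B y < B (σ x)))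
  have hσsymm : ∀ x, σ.symm x = σ x := by
    intro x
    apply σ.injective
    rw [Equiv.apply_symm_apply, hσσ]
  -- descent sets agree
  have hdes : ∀ T : Equiv.Perm (Fin n), wdes A T = wdes B (σ.trans T) := by
    intro T
    apply wdes_congr
    intro k hk
    have hinvap : (σ.trans T)⁻¹ ⟨k, hk⟩ = σ (T⁻¹ ⟨k, hk⟩) := by
      show (σ.trans T).symm _ = _
      rw [Equiv.symm_trans_apply, hσsymm]
      rfl
    rw [hinvap, hwpos, hwposB]
  -- inversions bridge to B
  have hinvB : ∀ T : Equiv.Perm (Fin n), winv (n-1) g T = winv (n-1) B (σ.trans T) := by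
    intro T
    unfold winv
    have h1 : (Finset.univ.filter (fun p : Fin n × Fin n =>
        g p.1 < g p.2 ∧ g p.2 < g p.1 + (n-1) ∧ T p.2 < T p.1))
        = Finset.univ.filter (fun p : Fin n × Fin n =>
            B ((σ.prodCongr σ) p).1 < B ((σ.prodCongr σ) p).2
            ∧ B ((σ.prodCongr σ) p).2 < B ((σ.prodCongr σ) p).1 + (n-1)
            ∧ (σ.trans T) ((σ.prodCongr σ) p).2 < (σ.trans T) ((σ.prodCongr σ) p).1) := by
      ext p
      simp only [Finset.mem_filter, Finset.mem_univ, true_and, Equiv.prodCongr_apply,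
        Prod.map_fst, Prod.map_snd, Equiv.trans_apply, hσB, hσσ]
    rw [h1]
    exact card_filter_equiv (σ.prodCongr σ)
      (fun q : Fin n × Fin n => B q.1 < B q.2 ∧ B q.2 < B q.1 + (n-1)
        ∧ (σ.trans T) q.2 < (σ.trans T) q.1)
  -- reindexing equivalence
  let eT : Equiv.Perm (Fin n) ≃ Equiv.Perm (Fin n) :=
    { toFun := fun T => σ.trans T
      invFun := fun T => σ.trans T
      left_inv := fun T => by ext x; simp [hσσ]
      right_inv := fun T => by ext x; simp [hσσ] }
  unfold wGF
  rw [Finset.smul_sum, ← Finset.sum_add_distrib]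
  refine Fintype.sum_equiv eT _ _ ?_
  intro T
  have hTne : T i ≠ T i1 := fun h => hii1 (T.injective h)
  have hwi : winv n A T = winv (n-1) B (σ.trans T) + (if T i < T i1 then ε else 0) := by
    rw [hinv T, hinvB T]
  have heT : eT T = σ.trans T := rfl
  rw [Set.indicator_univ, heT]
  rcases hε01 with h0 | h1
  · have hσr : σ.trans T = T := by
      rw [hσdef, if_neg (by omega)]
      exact Equiv.refl_trans T
    rw [hσr]
    rw [hσr] at hwi
    rcases lt_or_gt_of_ne hTne with hlt | hgt
    · rw [Set.indicator_of_mem (show T ∈ {T | T i < T i1} from hlt),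
        Set.indicator_of_notMem (show T ∉ {T | T i1 < T i} from not_lt.mpr (le_of_lt hlt)),
        smul_zero, add_zero, hdes T, hσr, hwi, if_pos hlt, h0, Nat.add_zero]
    · rw [Set.indicator_of_notMem (show T ∉ {T | T i < T i1} from not_lt.mpr (le_of_lt hgt)),
        Set.indicator_of_mem (show T ∈ {T | T i1 < T i} from hgt),
        zero_add, h0, pow_zero, one_smul, hdes T, hσr, hwi,
        if_neg (not_lt.mpr (le_of_lt hgt)), Nat.add_zero]
  · have hs : σ = Equiv.swap i i1 := by rw [hσdef, if_pos h1]
    have hTi : (σ.trans T) i = T i1 := by rw [hs]; simp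
    have hTi1 : (σ.trans T) i1 = T i := by rw [hs]; simp
    rcases lt_or_gt_of_ne hTne with hlt | hgt
    · have hmem : (σ.trans T) i1 < (σ.trans T) i := by rw [hTi, hTi1]; exact hlt
      rw [Set.indicator_of_notMem
          (show σ.trans T ∉ {T | T i < T i1} from not_lt.mpr (le_of_lt hmem)),
        Set.indicator_of_mem (show σ.trans T ∈ {T | T i1 < T i} from hmem),
        zero_add, hdes T, hwi, if_pos hlt, h1, Finsupp.smul_single, smul_eq_mul]
      congr 1
      ring
    · have hmem : (σ.trans T) i < (σ.trans T) i1 := by rw [hTi, hTi1]; exact hgt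
      rw [Set.indicator_of_mem (show σ.trans T ∈ {T | T i < T i1} from hmem),
        Set.indicator_of_notMem
          (show σ.trans T ∉ {T | T i1 < T i} from not_lt.mpr (le_of_lt hmem)),
        smul_zero, add_zero, hdes T, hwi, if_neg (not_lt.mpr (le_of_lt hgt)), Nat.add_zero]
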